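/- Let r ∈ ℕ_+ and s ∈ {1, ..., r}. Then for each n ≥ s, D_r(n) = Σ_{j=s}^n C(j-1, s-1)·(n!/(n-j)!)·D_{r-s}(n-j), where C(a,b) denotes the binomial coefficient. -/

import Mathlib

/-- The `r`-derangement number `D_r(n)`: the number of fixed-point-free permutations
of `n + r` elements such that the first `r` (distinguished) elements lie in pairwise
distinct cycles of the cycle decomposition. -/
noncomputable def rDerangement (r n : ℕ) : ℕ :=
  Nat.card {σ : Equiv.Perm (Fin (n + r)) //
    (∀ x, σ x ≠ x) ∧
    ∀ i j : Fin (n + r), (i : ℕ) < r → (j : ℕ) < r → i ≠ j → ¬ σ.SameCycle i j}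

lemma strictMono_fin_le {k N : ℕ} (f : Fin k → Fin N) (hf : StrictMono f) (i : Fin k) :
    (i : ℕ) ≤ (f i : ℕ) := by
  obtain ⟨m, hm⟩ := i
  induction m with
  | zero => exact Nat.zero_le _
  | succ p ih =>
    have hp : p < k := Nat.lt_of_succ_lt hm
    have h1 : (f ⟨p, hp⟩ : ℕ) < (f ⟨p+1, hm⟩ : ℕ) := by
      exact_mod_cast hf (show (⟨p, hp⟩ : Fin k) < ⟨p+1, hm⟩ by simp [Fin.lt_def])
    have h2 : p ≤ (f ⟨p, hp⟩ : ℕ) := ih hp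
    have h3 : ((⟨p, hp⟩ : Fin k) : ℕ) = p := rfl
    have h4 : ((⟨p+1, hm⟩ : Fin k) : ℕ) = p+1 := rfl
    omega

lemma orderEmbOfFin_initseg {N k r : ℕ} (s : Finset (Fin N)) (h : s.card = k)
    (hr : ∀ x : Fin N, (x : ℕ) < r → x ∈ s) {i : ℕ} (hik : i < k) (hir : i < r) :
    ((s.orderEmbOfFin h ⟨i, hik⟩ : Fin N) : ℕ) = i := by
  refine le_antisymm ?_ (strictMono_fin_le _ (s.orderEmbOfFin h).strictMono ⟨i, hik⟩)
  by_contra hlt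
  push_neg at hlt
  -- every m ≤ i is in s and is hit by an index < i
  have hN : ∀ m : ℕ, m ≤ i → m < N := fun m hm =>
    lt_of_le_of_lt (hm.trans hlt.le) (s.orderEmbOfFin h ⟨i, hik⟩).isLt
  have key : ∀ m : ℕ, (hm : m ≤ i) → ∃ t : Fin k, s.orderEmbOfFin h t = ⟨m, hN m hm⟩ := by
    intro m hm
    have hms : (⟨m, hN m hm⟩ : Fin N) ∈ s := hr _ (lt_of_le_of_lt hm hir)
    have := Finset.range_orderEmbOfFin s h
    rw [Set.ext_iff] at this
    exact (this _).2 hms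
  classical
  choose t ht using key
  have htlt : ∀ m (hm : m ≤ i), (t m hm : ℕ) < i := by
    intro m hm
    have : s.orderEmbOfFin h (t m hm) < s.orderEmbOfFin h ⟨i, hik⟩ := by
      rw [ht m hm]
      exact Fin.lt_def.2 (lt_of_le_of_lt hm hlt)
    have := (s.orderEmbOfFin h).strictMono.lt_iff_lt.1 this
    exact Fin.lt_def.1 this
  have hcard := Finset.card_le_card_of_injOn
    (fun m => if hm : m ≤ i then (t m hm : ℕ) else 0)
    (s := Finset.range (i+1)) (t := Finset.range i)
    (fun m hm => by
      simp only [Finset.coe_range, Set.mem_Iio, Finset.mem_range] at hm ⊢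
      rw [dif_pos (Nat.lt_succ_iff.1 hm)]
      exact htlt _ _)
    (fun m₁ hm₁ m₂ hm₂ hEq => by
      simp only [Finset.coe_range, Set.mem_Iio] at hm₁ hm₂
      have h₁ := Nat.lt_succ_iff.1 hm₁
      have h₂ := Nat.lt_succ_iff.1 hm₂
      have hEq2 : (t m₁ h₁ : ℕ) = (t m₂ h₂ : ℕ) := by
        simpa only [dif_pos h₁, dif_pos h₂] using hEq
      have : t m₁ h₁ = t m₂ h₂ := Fin.ext hEq2
      have h2 : s.orderEmbOfFin h (t m₁ h₁) = s.orderEmbOfFin h (t m₂ h₂) := by rw [this]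
      rw [ht, ht] at h2
      exact Fin.mk.inj_iff.1 h2)
  simp at hcard
namespace RDer

def P (R : ℕ) {m : ℕ} (σ : Equiv.Perm (Fin m)) : Prop :=
  (∀ x, σ x ≠ x) ∧
    ∀ i j : Fin m, (i : ℕ) < R → (j : ℕ) < R → i ≠ j → ¬ σ.SameCycle i j

def emb (R n : ℕ) : Fin n ↪ Fin (n + (R+1)) :=
  ⟨fun k => ⟨(k : ℕ) + (R+1), by omega⟩, fun x y h => by
    apply Fin.ext
    have := Fin.mk.inj_iff.1 h
    omega⟩

def pt (R n : ℕ) : Fin (n + (R+1)) := ⟨R, by omega⟩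

variable {R n j : ℕ}

def L (R : ℕ) {n j : ℕ} (e : Fin j ↪ Fin n) : List (Fin (n + (R+1))) :=
  pt R n :: (List.finRange j).map (fun i => emb R n (e i))

variable (e : Fin j ↪ Fin n)

lemma mem_L {x : Fin (n + (R+1))} :
    x ∈ L R e ↔ x = pt R n ∨ ∃ i, emb R n (e i) = x := by
  simp [L, List.mem_map, List.mem_finRange, eq_comm]

lemma length_L : (L R e).length = j + 1 := by simp [L]

lemma nodup_L : (L R e).Nodup := by
  refine List.Nodup.cons ?_ ?_
  · intro hmem
    obtain ⟨i, -, hi⟩ := List.mem_map.1 hmem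
    have := Fin.mk.inj_iff.1 hi
    change ((e i : Fin n) : ℕ) + (R+1) = R at this
    omega
  · refine List.Nodup.map_on ?_ (List.nodup_finRange j)
    intro a _ b _ hab
    exact e.injective ((emb R n).injective hab)

def Cset (R : ℕ) {n j : ℕ} (e : Fin j ↪ Fin n) : Finset (Fin (n + (R+1))) :=
  (L R e).toFinsetᶜ

lemma mem_Cset {x : Fin (n + (R+1))} : x ∈ Cset R e ↔ x ∉ L R e := by
  simp [Cset]

lemma card_Cset (hjn : j ≤ n) : (Cset R e).card = n - j + R := by
  rw [Cset, Finset.card_compl, List.toFinset_card_of_nodup (nodup_L e), length_L]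
  simp only [Fintype.card_fin]
  omega

lemma low_mem_Cset {x : Fin (n + (R+1))} (hx : (x : ℕ) < R) : x ∈ Cset R e := by
  rw [mem_Cset, mem_L]
  rintro (h | ⟨i, h⟩)
  · rw [h] at hx; simp [pt] at hx
  · rw [← h] at hx; change ((e i : Fin n) : ℕ) + (R+1) < R at hx; omega

def gEq (hjn : j ≤ n) : Fin (n - j + R) ≃ {x // x ∈ Cset R e} :=
  ((Cset R e).orderIsoOfFin (card_Cset e hjn)).toEquiv

lemma gEq_low (hjn : j ≤ n) {t : Fin (n - j + R)} (ht : (t : ℕ) < R) :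
    ((gEq e hjn t : Fin (n + (R+1))) : ℕ) = (t : ℕ) := by
  have h : ((Cset R e).orderEmbOfFin (card_Cset e hjn) ⟨(t : ℕ), t.isLt⟩ : ℕ) = (t : ℕ) :=
    orderEmbOfFin_initseg _ _ (fun x hx => low_mem_Cset e hx) t.isLt ht
  rw [Fin.eta] at h
  exact h

lemma gEq_ge (hjn : j ≤ n) (t : Fin (n - j + R)) :
    (t : ℕ) ≤ ((gEq e hjn t : Fin (n + (R+1))) : ℕ) := by
  have hsm : StrictMono (fun t : Fin (n - j + R) => (gEq e hjn t : Fin (n + (R+1)))) := by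
    intro a b hab
    exact ((Cset R e).orderIsoOfFin (card_Cset e hjn)).strictMono hab
  exact strictMono_fin_le _ hsm t

lemma gEq_high (hjn : j ≤ n) {t : Fin (n - j + R)} (ht : R ≤ (t : ℕ)) :
    R + 1 ≤ ((gEq e hjn t : Fin (n + (R+1))) : ℕ) := by
  have h1 := gEq_ge e hjn t
  have h2 : (gEq e hjn t : Fin (n + (R+1))) ∈ Cset R e := (gEq e hjn t).2
  have h3 : ((gEq e hjn t : Fin (n + (R+1))) : ℕ) ≠ R := by
    intro hR
    rw [mem_Cset, mem_L] at h2
    exact h2 (Or.inl (Fin.ext hR))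
  omega

lemma gEq_dist (hjn : j ≤ n) {x : Fin (n + (R+1))} (hx : (x : ℕ) < R) (hRM : (x : ℕ) < n - j + R) :
    (gEq e hjn ⟨(x : ℕ), hRM⟩ : Fin (n + (R+1))) = x :=
  Fin.ext (gEq_low e hjn hx)

end RDer
lemma getElem_congr' {α : Type*} (l : List α) {i k : ℕ} (h : i = k) (hi : i < l.length) :
    l[i]'hi = l[k]'(h ▸ hi) := by subst h; rfl

lemma sameCycle_congr {α : Type*} [Fintype α] [DecidableEq α] {f h : Equiv.Perm α} {C : Finset α}
    (hfh : ∀ x ∈ C, f x = h x ∧ f x ∈ C) {x y : α} (hx : x ∈ C) (hc : f.SameCycle x y) :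
    h.SameCycle x y := by
  have key : ∀ m : ℕ, (f ^ m) x = (h ^ m) x ∧ (f ^ m) x ∈ C := by
    intro m; induction m with
    | zero => simpa using hx
    | succ p ih =>
      have h1 : (f ^ (p+1)) x = f ((f ^ p) x) := by
        rw [pow_succ', Equiv.Perm.mul_apply]
      have h2 : (h ^ (p+1)) x = h ((h ^ p) x) := by
        rw [pow_succ', Equiv.Perm.mul_apply]
      obtain ⟨ha, hb⟩ := ih
      obtain ⟨hc', hd⟩ := hfh _ hb
      exact ⟨by rw [h1, h2, ← ha, hc'], by rw [h1, hc', ← hc']; exact hd⟩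
  obtain ⟨k, -, hk⟩ := hc.exists_pow_eq'
  exact ⟨(k : ℤ), by rw [zpow_natCast, ← (key k).1, hk]⟩

namespace RDer

variable {R n j : ℕ}

def FF (R : ℕ) {n j : ℕ} (e : Fin j ↪ Fin n) (hjn : j ≤ n) (τ : Equiv.Perm (Fin (n - j + R))) :
    Equiv.Perm (Fin (n + (R+1))) :=
  (L R e).formPerm * (τ.extendDomain (gEq e hjn))

variable (e : Fin j ↪ Fin n) (hjn : j ≤ n) (τ : Equiv.Perm (Fin (n - j + R)))

lemma E_apply_mem {x : Fin (n + (R+1))} (hx : x ∈ Cset R e) :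
    (τ.extendDomain (gEq e hjn)) x
      = (gEq e hjn (τ ((gEq e hjn).symm ⟨x, hx⟩)) : Fin (n + (R+1))) :=
  Equiv.Perm.extendDomain_apply_subtype _ _ hx

lemma E_mem {x : Fin (n + (R+1))} (hx : x ∈ Cset R e) :
    (τ.extendDomain (gEq e hjn)) x ∈ Cset R e := by
  rw [E_apply_mem e hjn τ hx]; exact (gEq e hjn (τ ((gEq e hjn).symm ⟨x, hx⟩))).2

lemma F_apply_of_mem_L {x : Fin (n + (R+1))} (hx : x ∈ L R e) :
    FF R e hjn τ x = (L R e).formPerm x := by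
  have hx' : ¬ x ∈ Cset R e := by rw [mem_Cset]; exact fun h => h hx
  rw [FF, Equiv.Perm.mul_apply, Equiv.Perm.extendDomain_apply_not_subtype _ _ hx']

lemma F_apply_of_mem_C {x : Fin (n + (R+1))} (hx : x ∈ Cset R e) :
    FF R e hjn τ x = (τ.extendDomain (gEq e hjn)) x := by
  rw [FF, Equiv.Perm.mul_apply]
  exact List.formPerm_apply_of_notMem ((mem_Cset e).1 (E_mem e hjn τ hx))

lemma F_agree : ∀ x ∈ Cset R e,
    FF R e hjn τ x = (τ.extendDomain (gEq e hjn)) x ∧ FF R e hjn τ x ∈ Cset R e := by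
  intro x hx
  refine ⟨F_apply_of_mem_C e hjn τ hx, ?_⟩
  rw [F_apply_of_mem_C e hjn τ hx]; exact E_mem e hjn τ hx

lemma E_agree : ∀ x ∈ Cset R e,
    (τ.extendDomain (gEq e hjn)) x = FF R e hjn τ x ∧ (τ.extendDomain (gEq e hjn)) x ∈ Cset R e :=
  fun x hx => ⟨(F_apply_of_mem_C e hjn τ hx).symm, E_mem e hjn τ hx⟩

lemma F_pow_pt (hj1 : 1 ≤ j) (k : ℕ) :
    ((FF R e hjn τ) ^ k) (pt R n) = (L R e)[k % (j+1)]'(by rw [length_L]; exact Nat.mod_lt _ (Nat.succ_pos j)) := by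
  induction k with
  | zero =>
    simp only [pow_zero, Equiv.Perm.one_apply, Nat.zero_mod]
    rfl
  | succ p ih =>
    have h1 : ((FF R e hjn τ) ^ (p+1)) (pt R n) = (FF R e hjn τ) (((FF R e hjn τ) ^ p) (pt R n)) := by
      rw [pow_succ', Equiv.Perm.mul_apply]
    rw [h1, ih]
    have hmem : (L R e)[p % (j+1)]'(by rw [length_L]; exact Nat.mod_lt _ (Nat.succ_pos j)) ∈ L R e := List.getElem_mem _
    rw [F_apply_of_mem_L e hjn τ hmem, List.formPerm_apply_getElem _ (nodup_L e)]
    rw [getElem_congr' _ (show (p % (j+1) + 1) % (L R e).length = (p+1) % (j+1) by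
      rw [length_L]
      conv_rhs => rw [Nat.add_mod]
      rw [Nat.mod_eq_of_lt (show 1 < j+1 by omega)])]

lemma F_derange (hj1 : 1 ≤ j) (hτ : ∀ t, τ t ≠ t) : ∀ x, FF R e hjn τ x ≠ x := by
  intro x
  by_cases hx : x ∈ Cset R e
  · rw [F_apply_of_mem_C e hjn τ hx, E_apply_mem e hjn τ hx]
    intro hEq
    have : gEq e hjn (τ ((gEq e hjn).symm ⟨x, hx⟩)) = ⟨x, hx⟩ := Subtype.ext hEq
    have h2 : τ ((gEq e hjn).symm ⟨x, hx⟩) = (gEq e hjn).symm ⟨x, hx⟩ := by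
      have := congrArg (gEq e hjn).symm this
      simpa using this
    exact hτ _ h2
  · have hxL : x ∈ L R e := by rwa [mem_Cset, not_not] at hx
    rw [F_apply_of_mem_L e hjn τ hxL]
    rw [List.formPerm_apply_mem_ne_self_iff _ (nodup_L e) _ hxL, length_L]
    omega
lemma not_sameCycle_pt (hj1 : 1 ≤ j) {x : Fin (n + (R+1))} (hx : x ∈ Cset R e) :
    ¬ (FF R e hjn τ).SameCycle (pt R n) x := by
  intro h
  obtain ⟨k, -, hk⟩ := h.exists_pow_eq'
  rw [F_pow_pt e hjn τ hj1 k] at hk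
  exact (mem_Cset e).1 hx (hk ▸ List.getElem_mem _)

lemma sameCycle_C_iff (hj1 : 1 ≤ j) {x y : Fin (n + (R+1))}
    (hx : x ∈ Cset R e) (hy : y ∈ Cset R e) :
    (FF R e hjn τ).SameCycle x y ↔
      τ.SameCycle ((gEq e hjn).symm ⟨x, hx⟩) ((gEq e hjn).symm ⟨y, hy⟩) := by
  have hE : (FF R e hjn τ).SameCycle x y ↔ (τ.extendDomain (gEq e hjn)).SameCycle x y :=
    ⟨sameCycle_congr (F_agree e hjn τ) hx, sameCycle_congr (E_agree e hjn τ) hx⟩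
  rw [hE]
  have hxu : ((gEq e hjn) ((gEq e hjn).symm ⟨x, hx⟩) : Fin (n + (R+1))) = x := by simp
  have hyv : ((gEq e hjn) ((gEq e hjn).symm ⟨y, hy⟩) : Fin (n + (R+1))) = y := by simp
  conv_lhs => rw [← hxu, ← hyv]
  exact Equiv.Perm.sameCycle_extendDomain

lemma support_cycleOf_pt (hj1 : 1 ≤ j) (hτ : ∀ t, τ t ≠ t) :
    ((FF R e hjn τ).cycleOf (pt R n)).support = (L R e).toFinset := by
  have hpt : pt R n ∈ (FF R e hjn τ).support :=
    Equiv.Perm.mem_support.2 (F_derange e hjn τ hj1 hτ _)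
  ext y
  rw [Equiv.Perm.mem_support_cycleOf_iff, List.mem_toFinset]
  constructor
  · rintro ⟨hsc, -⟩
    obtain ⟨k, -, hk⟩ := hsc.exists_pow_eq'
    rw [F_pow_pt e hjn τ hj1 k] at hk
    exact hk ▸ List.getElem_mem _
  · intro hyL
    refine ⟨?_, hpt⟩
    obtain ⟨m, hm, hget⟩ := List.mem_iff_getElem.1 hyL
    have hmlt : m < j + 1 := by rwa [length_L] at hm
    have hpow : ((FF R e hjn τ) ^ m) (pt R n) = y := by
      rw [F_pow_pt e hjn τ hj1 m, getElem_congr' _ (Nat.mod_eq_of_lt hmlt)]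
      exact hget
    exact ⟨(m : ℤ), by rw [zpow_natCast]; exact hpow⟩

lemma card_support_cycleOf_pt (hj1 : 1 ≤ j) (hτ : ∀ t, τ t ≠ t) :
    ((FF R e hjn τ).cycleOf (pt R n)).support.card = j + 1 := by
  rw [support_cycleOf_pt e hjn τ hj1 hτ, List.toFinset_card_of_nodup (nodup_L e), length_L]

lemma F_P (hj1 : 1 ≤ j) (hτ : P R τ) : P (R+1) (FF R e hjn τ) := by
  refine ⟨F_derange e hjn τ hj1 hτ.1, ?_⟩
  intro i i' hi hi' hne hsc
  by_cases hipt : i = pt R n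
  · have hi'R : (i' : ℕ) < R := by
      have : (i' : ℕ) ≠ R := fun h => (hipt ▸ hne) (Fin.ext (by simp [pt, h])).symm
      omega
    exact not_sameCycle_pt e hjn τ hj1 (low_mem_Cset e hi'R) (hipt ▸ hsc)
  by_cases hi'pt : i' = pt R n
  · have hiR : (i : ℕ) < R := by
      have : (i : ℕ) ≠ R := fun h => hipt (Fin.ext (by simp [pt, h]))
      omega
    exact not_sameCycle_pt e hjn τ hj1 (low_mem_Cset e hiR) (hi'pt ▸ hsc.symm)
  have hiR : (i : ℕ) < R := by
    have : (i : ℕ) ≠ R := fun h => hipt (Fin.ext (by simp [pt, h]))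
    omega
  have hi'R : (i' : ℕ) < R := by
    have : (i' : ℕ) ≠ R := fun h => hi'pt (Fin.ext (by simp [pt, h]))
    omega
  have hx : i ∈ Cset R e := low_mem_Cset e hiR
  have hy : i' ∈ Cset R e := low_mem_Cset e hi'R
  rw [sameCycle_C_iff e hjn τ hj1 hx hy] at hsc
  have hltM : (i : ℕ) < n - j + R := by omega
  have hltM' : (i' : ℕ) < n - j + R := by omega
  have hu : (gEq e hjn).symm ⟨i, hx⟩ = ⟨(i : ℕ), hltM⟩ := by
    apply (gEq e hjn).injective
    simp only [Equiv.apply_symm_apply]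
    exact Subtype.ext (gEq_dist e hjn hiR hltM).symm
  have hv : (gEq e hjn).symm ⟨i', hy⟩ = ⟨(i' : ℕ), hltM'⟩ := by
    apply (gEq e hjn).injective
    simp only [Equiv.apply_symm_apply]
    exact Subtype.ext (gEq_dist e hjn hi'R hltM').symm
  rw [hu, hv] at hsc
  refine hτ.2 ⟨(i : ℕ), hltM⟩ ⟨(i' : ℕ), hltM'⟩ hiR hi'R ?_ hsc
  intro hEq
  exact hne (Fin.ext (by simpa using Fin.mk.inj_iff.1 hEq))
lemma F_entry (hj1 : 1 ≤ j) (i : Fin j) :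
    ((FF R e hjn τ) ^ ((i : ℕ) + 1)) (pt R n) = emb R n (e i) := by
  rw [F_pow_pt e hjn τ hj1, getElem_congr' _ (Nat.mod_eq_of_lt (by omega : (i : ℕ) + 1 < j + 1))]
  show (L R e)[(i : ℕ) + 1]'_ = _
  simp only [L, List.getElem_cons_succ, List.getElem_map, List.getElem_finRange, Fin.eta]
  congr 1

lemma F_on_C_image (t : Fin (n - j + R)) :
    FF R e hjn τ ((gEq e hjn t : Fin (n + (R+1)))) = ((gEq e hjn) (τ t) : Fin (n + (R+1))) := by
  rw [F_apply_of_mem_C e hjn τ (gEq e hjn t).2]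
  exact Equiv.Perm.extendDomain_apply_image τ (gEq e hjn) t

lemma FF_inj_same (hj1 : 1 ≤ j) (e' : Fin j ↪ Fin n) (τ' : Equiv.Perm (Fin (n - j + R)))
    (hEq : FF R e hjn τ = FF R e' hjn τ') : e = e' ∧ τ = τ' := by
  have he : e = e' := by
    apply DFunLike.ext
    intro i
    apply (emb R n).injective
    rw [← F_entry e hjn τ hj1 i, ← F_entry e' hjn τ' hj1 i, hEq]
  subst he
  refine ⟨rfl, ?_⟩
  apply Equiv.ext
  intro t
  have h1 := F_on_C_image e hjn τ t
  have h2 := F_on_C_image e hjn τ' t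
  rw [hEq] at h1
  rw [h1] at h2
  exact (gEq e hjn).injective (Subtype.ext h2)
lemma exists_data (σ : Equiv.Perm (Fin (n + (R+1)))) (hP : P (R+1) σ) :
    ∃ (j : ℕ) (_ : 1 ≤ j) (hjn : j ≤ n) (e : Fin j ↪ Fin n)
      (τ : Equiv.Perm (Fin (n - j + R))), P R τ ∧ FF R e hjn τ = σ := by
  classical
  have hptsupp : pt R n ∈ σ.support := Equiv.Perm.mem_support.2 (hP.1 _)
  set m := (σ.cycleOf (pt R n)).support.card with hm
  have hm2 : 2 ≤ m := by
    rw [hm, ← Equiv.Perm.length_toList]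
    exact Equiv.Perm.two_le_length_toList_iff_mem_support.2 hptsupp
  have hlen : (σ.toList (pt R n)).length = m := Equiv.Perm.length_toList σ _
  have hpow_inj : ∀ k k', k < m → k' < m →
      (σ ^ k) (pt R n) = (σ ^ k') (pt R n) → k = k' := by
    intro k k' hk hk' hEq
    have hinj := List.nodup_iff_injective_get.1 (Equiv.Perm.nodup_toList σ (pt R n))
      (a₁ := ⟨k, by rw [hlen]; exact hk⟩) (a₂ := ⟨k', by rw [hlen]; exact hk'⟩)
    have h2 : (⟨k, by rw [hlen]; exact hk⟩ : Fin (σ.toList (pt R n)).length)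
        = ⟨k', by rw [hlen]; exact hk'⟩ := by
      apply hinj
      simp only [List.get_eq_getElem, Equiv.Perm.getElem_toList]
      exact hEq
    exact Fin.mk.inj_iff.1 h2
  have high : ∀ k, 1 ≤ k → k < m → R + 1 ≤ ((σ ^ k) (pt R n) : ℕ) := by
    intro k hk1 hkm
    have hne_pt : (σ ^ k) (pt R n) ≠ pt R n := by
      intro hEq
      have h0 : (σ ^ k) (pt R n) = (σ ^ 0) (pt R n) := by
        rw [hEq]; simp
      have := hpow_inj k 0 hkm (by omega) h0
      omega
    by_contra hlow
    push_neg at hlow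
    have hne_val : ((σ ^ k) (pt R n) : ℕ) ≠ R := fun h => hne_pt (Fin.ext h)
    have hscycle : σ.SameCycle (pt R n) ((σ ^ k) (pt R n)) := ⟨(k : ℤ), by rw [zpow_natCast]⟩
    exact hP.2 (pt R n) ((σ ^ k) (pt R n))
      (show R < R + 1 from Nat.lt_succ_self R) (by omega) (Ne.symm hne_pt) hscycle
  set jj := m - 1 with hjj
  have hemb : ∀ i : Fin jj, ((σ ^ ((i : ℕ)+1)) (pt R n) : ℕ) - (R+1) < n := by
    intro i
    have h1 := ((σ ^ ((i : ℕ)+1)) (pt R n)).isLt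
    have h2 := high ((i : ℕ)+1) (by omega) (by omega)
    omega
  have eσinj : Function.Injective
      (fun i : Fin jj => (⟨((σ ^ ((i : ℕ)+1)) (pt R n) : ℕ) - (R+1), hemb i⟩ : Fin n)) := by
    intro i i' hEq
    have h1 := high ((i : ℕ)+1) (by omega) (by omega)
    have h2 := high ((i' : ℕ)+1) (by omega) (by omega)
    have hv : (((σ ^ ((i : ℕ)+1)) (pt R n)) : ℕ) = ((σ ^ ((i' : ℕ)+1)) (pt R n) : ℕ) := by
      have := Fin.mk.inj_iff.1 hEq; omega
    have := hpow_inj _ _ (by omega) (by omega) (Fin.ext hv)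
    exact Fin.ext (by omega)
  set eσ : Fin jj ↪ Fin n :=
    ⟨fun i => ⟨((σ ^ ((i : ℕ)+1)) (pt R n) : ℕ) - (R+1), hemb i⟩, eσinj⟩ with heσ
  have hjn : jj ≤ n := by simpa using Fintype.card_le_of_embedding eσ
  have hj1 : 1 ≤ jj := by omega
  have hLeq : L R eσ = σ.toList (pt R n) := by
    apply List.ext_getElem
    · rw [length_L, hlen]; omega
    · intro k hk1 hk2
      rw [hlen] at hk2
      have hget : (σ.toList (pt R n))[k]'(by rw [hlen]; exact hk2) = (σ ^ k) (pt R n) := by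
        have := Equiv.Perm.getElem_toList (p := σ) (x := pt R n) k (by rw [hlen]; exact hk2)
        exact this
      rw [hget]
      match k, hk2 with
      | 0, _ =>
        show pt R n = _
        simp
      | (p+1), hk2 =>
        have hp : p < jj := by omega
        show (L R eσ)[p+1]'_ = _
        simp only [L, List.getElem_cons_succ, List.getElem_map, List.getElem_finRange]
        apply Fin.ext
        show ((σ ^ ((p : ℕ)+1)) (pt R n) : ℕ) - (R+1) + (R+1) = _
        have := high (p+1) (by omega) (by omega)
        omega
  have hCmem : ∀ x : Fin (n + (R+1)), x ∈ Cset R eσ ↔ ¬ σ.SameCycle (pt R n) x := by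
    intro x
    rw [mem_Cset, hLeq, Equiv.Perm.mem_toList_iff]
    simp [hptsupp]
  have hinv : ∀ x : Fin (n + (R+1)), x ∈ Cset R eσ ↔ σ x ∈ Cset R eσ := by
    intro x; rw [hCmem, hCmem, Equiv.Perm.sameCycle_apply_right]
  set ρ : Equiv.Perm {x // x ∈ Cset R eσ} := σ.subtypePerm (fun x => (hinv x).symm) with hρ
  set τσ : Equiv.Perm (Fin (n - jj + R)) := (gEq eσ hjn).symm.permCongr ρ with hτσ
  have hτapp : ∀ t, ((gEq eσ hjn) (τσ t) : Fin (n + (R+1)))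
      = σ ((gEq eσ hjn t : Fin (n + (R+1)))) := by
    intro t
    have h1 : τσ t = (gEq eσ hjn).symm (ρ ((gEq eσ hjn) t)) := by
      simp [hτσ, Equiv.permCongr_apply]
    rw [h1, Equiv.apply_symm_apply]
    rfl
  have hEagree : ∀ x ∈ Cset R eσ,
      (τσ.extendDomain (gEq eσ hjn)) x = σ x ∧ (τσ.extendDomain (gEq eσ hjn)) x ∈ Cset R eσ := by
    intro x hx
    have h1 : (τσ.extendDomain (gEq eσ hjn)) x
        = ((gEq eσ hjn) (τσ ((gEq eσ hjn).symm ⟨x, hx⟩)) : Fin (n + (R+1))) :=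
      Equiv.Perm.extendDomain_apply_subtype _ _ hx
    constructor
    · rw [h1, hτapp]
      simp only [Equiv.apply_symm_apply]
    · rw [h1, hτapp]
      simp only [Equiv.apply_symm_apply]
      exact (hinv x).1 hx
  have hτP : P R τσ := by
    constructor
    · intro t hEq
      have h1 := hτapp t
      rw [hEq] at h1
      exact hP.1 ((gEq eσ hjn t : Fin (n + (R+1)))) h1.symm
    · intro t t' ht ht' hne hsc
      have hext : (τσ.extendDomain (gEq eσ hjn)).SameCycle
          ((gEq eσ hjn t : Fin (n + (R+1)))) ((gEq eσ hjn t' : Fin (n + (R+1)))) :=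
        Equiv.Perm.sameCycle_extendDomain.2 hsc
      have hscσ : σ.SameCycle ((gEq eσ hjn t : Fin (n + (R+1))))
          ((gEq eσ hjn t' : Fin (n + (R+1)))) :=
        sameCycle_congr hEagree (gEq eσ hjn t).2 hext
      have hv : ((gEq eσ hjn t : Fin (n + (R+1))) : ℕ) = (t : ℕ) := gEq_low eσ hjn ht
      have hv' : ((gEq eσ hjn t' : Fin (n + (R+1))) : ℕ) = (t' : ℕ) := gEq_low eσ hjn ht'
      refine hP.2 _ _ (by omega) (by omega) ?_ hscσ
      intro hEq
      apply hne
      apply Fin.ext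
      have := congrArg (fun z : Fin (n + (R+1)) => (z : ℕ)) hEq
      omega
  refine ⟨jj, hj1, hjn, eσ, τσ, hτP, ?_⟩
  apply Equiv.ext
  intro x
  by_cases hx : x ∈ Cset R eσ
  · rw [F_apply_of_mem_C eσ hjn τσ hx]
    exact (hEagree x hx).1
  · have hxL : x ∈ L R eσ := by rwa [mem_Cset, not_not] at hx
    rw [F_apply_of_mem_L eσ hjn τσ hxL, hLeq, Equiv.Perm.formPerm_toList]
    apply Equiv.Perm.SameCycle.cycleOf_apply
    rw [hLeq] at hxL
    exact (Equiv.Perm.mem_toList_iff.1 hxL).1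
end RDer

open RDer in
instance {R m : ℕ} : DecidablePred (P R (m := m)) := fun σ => by
  unfold P; infer_instance

open RDer in
lemma key_recurrence (R n : ℕ) :
    rDerangement (R+1) n
      = ∑ j ∈ Finset.Icc 1 n, n.descFactorial j * rDerangement R (n - j) := by
  classical
  have h1 : rDerangement (R+1) n
      = Nat.card {σ : Equiv.Perm (Fin (n + (R+1))) // P (R+1) σ} := rfl
  rw [h1]
  have h2 : Nat.card (Σ j : (Finset.Icc 1 n), ((Fin (j : ℕ) ↪ Fin n) ×
      {τ : Equiv.Perm (Fin (n - (j : ℕ) + R)) // P R τ}))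
      = Nat.card {σ : Equiv.Perm (Fin (n + (R+1))) // P (R+1) σ} := by
    apply Nat.card_eq_of_bijective (fun d =>
      ⟨FF R d.2.1 (Finset.mem_Icc.1 d.1.2).2 d.2.2.1,
        F_P d.2.1 (Finset.mem_Icc.1 d.1.2).2 d.2.2.1 (Finset.mem_Icc.1 d.1.2).1 d.2.2.2⟩)
    constructor
    · rintro ⟨⟨j, hj⟩, e, τ, hτ⟩ ⟨⟨j', hj'⟩, e', τ', hτ'⟩ hEq
      have hEq' : FF R e (Finset.mem_Icc.1 hj).2 τ = FF R e' (Finset.mem_Icc.1 hj').2 τ' :=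
        congrArg Subtype.val hEq
      have hjj : j = j' := by
        have c1 := card_support_cycleOf_pt e (Finset.mem_Icc.1 hj).2 τ
          (Finset.mem_Icc.1 hj).1 hτ.1
        have c2 := card_support_cycleOf_pt e' (Finset.mem_Icc.1 hj').2 τ'
          (Finset.mem_Icc.1 hj').1 hτ'.1
        rw [hEq'] at c1
        rw [c2] at c1
        exact (Nat.succ_injective c1).symm
      subst hjj
      obtain ⟨he, hτe⟩ := FF_inj_same e (Finset.mem_Icc.1 hj).2 τ
        (Finset.mem_Icc.1 hj).1 e' τ' hEq'
      apply Sigma.ext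
      · rfl
      · apply heq_of_eq
        exact Prod.ext he (Subtype.ext hτe)
    · rintro ⟨σ, hσ⟩
      obtain ⟨j, hj1, hjn, e, τ, hτ, hFeq⟩ := exists_data σ hσ
      exact ⟨⟨⟨j, Finset.mem_Icc.2 ⟨hj1, hjn⟩⟩, e, τ, hτ⟩, Subtype.ext hFeq⟩
  rw [← h2, Nat.card_eq_fintype_card, Fintype.card_sigma]
  have h3 : ∀ i : (Finset.Icc 1 n),
      Fintype.card ((Fin (i : ℕ) ↪ Fin n) ×
        {τ : Equiv.Perm (Fin (n - (i : ℕ) + R)) // P R τ})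
      = n.descFactorial (i : ℕ) * rDerangement R (n - (i : ℕ)) := by
    intro i
    rw [Fintype.card_prod, Fintype.card_embedding_eq, Fintype.card_fin, Fintype.card_fin]
    congr 1
    have h4 : rDerangement R (n - (i : ℕ))
        = Nat.card {τ : Equiv.Perm (Fin (n - (i : ℕ) + R)) // P R τ} := rfl
    rw [h4, Nat.card_eq_fintype_card]
  simp_rw [h3]
  exact Finset.sum_coe_sort (Finset.Icc 1 n) (fun j => n.descFactorial j * rDerangement R (n - j))
lemma descFactorial_add_eq (n a b : ℕ) :
    n.descFactorial (a + b) = n.descFactorial a * (n - a).descFactorial b := by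
  induction b with
  | zero => simp
  | succ p ih =>
    rw [show a + (p+1) = (a+p)+1 from rfl, Nat.descFactorial_succ, Nat.descFactorial_succ, ih,
      ← Nat.sub_sub]
    ring

lemma sum_triangle (a b : ℕ) (ha : 1 ≤ a) (f : ℕ → ℕ → ℕ) :
    ∑ j ∈ Finset.Icc a b, ∑ k ∈ Finset.Icc (j+1) b, f j k
      = ∑ k ∈ Finset.Icc (a+1) b, ∑ j ∈ Finset.Icc a (k-1), f j k := by
  have h1 : ∑ j ∈ Finset.Icc a b, ∑ k ∈ Finset.Icc (j+1) b, f j k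
      = ∑ j ∈ Finset.Icc a b, ∑ k ∈ Finset.Icc a b, if j < k then f j k else 0 := by
    refine Finset.sum_congr rfl fun j hj => ?_
    rw [← Finset.sum_filter]
    refine Finset.sum_congr ?_ fun _ _ => rfl
    ext k
    simp only [Finset.mem_Icc, Finset.mem_filter] at hj ⊢
    omega
  have h2 : ∑ k ∈ Finset.Icc (a+1) b, ∑ j ∈ Finset.Icc a (k-1), f j k
      = ∑ k ∈ Finset.Icc (a+1) b, ∑ j ∈ Finset.Icc a b, if j < k then f j k else 0 := by
    refine Finset.sum_congr rfl fun k hk => ?_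
    rw [← Finset.sum_filter]
    refine Finset.sum_congr ?_ fun _ _ => rfl
    ext j
    simp only [Finset.mem_Icc, Finset.mem_filter] at hk ⊢
    omega
  rw [h1, Finset.sum_comm, h2]
  have h3 : Finset.Icc (a+1) b = (Finset.Icc a b).erase a := by
    ext x
    simp only [Finset.mem_erase, Finset.mem_Icc]
    omega
  have h4 : (∑ j ∈ Finset.Icc a b, if j < a then f j a else 0) = 0 := by
    apply Finset.sum_eq_zero
    intro j hj
    simp only [Finset.mem_Icc] at hj
    rw [if_neg (by omega)]
  rw [h3]
  exact (Finset.sum_erase (f := fun k => ∑ j ∈ Finset.Icc a b, if j < k then f j k else 0)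
    _ h4).symm

lemma hockey (s k : ℕ) (hs : 1 ≤ s) (hk : 2 ≤ k) :
    ∑ j ∈ Finset.Icc s (k-1), (j-1).choose (s-1) = (k-1).choose s := by
  have hmap : (Finset.Icc (s-1) (k-2)).map (addLeftEmbedding 1) = Finset.Icc s (k-1) := by
    rw [Finset.map_add_left_Icc]
    congr 1 <;> omega
  rw [← hmap, Finset.sum_map]
  have h1 : ∀ m ∈ Finset.Icc (s-1) (k-2),
      ((addLeftEmbedding 1 m : ℕ) - 1).choose (s-1) = m.choose (s-1) := by
    intro m _
    have : (addLeftEmbedding 1 m : ℕ) = 1 + m := rfl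
    rw [this]
    congr 1
    omega
  rw [Finset.sum_congr rfl h1, Nat.sum_Icc_choose]
  congr 1 <;> omega

lemma sum_shift (j nb : ℕ) (hj : j ≤ nb) (f : ℕ → ℕ) :
    ∑ k ∈ Finset.Icc (j+1) nb, f k = ∑ i ∈ Finset.Icc 1 (nb - j), f (j + i) := by
  have hmap : (Finset.Icc 1 (nb - j)).map (addLeftEmbedding j) = Finset.Icc (j+1) nb := by
    rw [Finset.map_add_left_Icc]
    congr 1
    omega
  rw [← hmap, Finset.sum_map]
  exact Finset.sum_congr rfl fun i _ => rfl

theorem rDerangement_convolution (r s n : ℕ) (hr : 0 < r) (hs : 1 ≤ s) (hsr : s ≤ r)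
    (hn : s ≤ n) :
    rDerangement r n =
      ∑ j ∈ Finset.Icc s n,
        (j - 1).choose (s - 1) * (n.factorial / (n - j).factorial) *
          rDerangement (r - s) (n - j) := by
  induction s with
  | zero => exact absurd hs (by omega)
  | succ s ih =>
    rcases Nat.eq_zero_or_pos s with hs0 | hs1
    · subst hs0
      have hkey := key_recurrence (r - 1) n
      rw [show r - 1 + 1 = r by omega] at hkey
      rw [hkey]
      refine Finset.sum_congr rfl fun j hj => ?_
      simp only [Finset.mem_Icc] at hj
      rw [show (0+1 : ℕ) - 1 = 0 from rfl, Nat.choose_zero_right, one_mul,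
        ← Nat.descFactorial_eq_div hj.2]
    · have hIH := ih (by omega) (by omega) (by omega)
      rw [hIH]
      calc
        ∑ j ∈ Finset.Icc s n, (j - 1).choose (s - 1) * (n.factorial / (n - j).factorial) *
            rDerangement (r - s) (n - j)
            = ∑ j ∈ Finset.Icc s n, ∑ k ∈ Finset.Icc (j+1) n,
                (j-1).choose (s-1) * (n.descFactorial k * rDerangement (r - (s+1)) (n - k)) := by
              refine Finset.sum_congr rfl fun j hj => ?_
              simp only [Finset.mem_Icc] at hj
              rw [← Nat.descFactorial_eq_div hj.2]
              rw [show r - s = (r - (s+1)) + 1 by omega, key_recurrence (r - (s+1)) (n - j)]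
              rw [Finset.mul_sum]
              rw [sum_shift j n hj.2
                (fun k => (j-1).choose (s-1) * (n.descFactorial k * rDerangement (r-(s+1)) (n-k)))]
              refine Finset.sum_congr rfl fun i hi => ?_
              rw [descFactorial_add_eq n j i, Nat.sub_sub]
              ring
        _ = ∑ k ∈ Finset.Icc (s+1) n, ∑ j ∈ Finset.Icc s (k-1),
                (j-1).choose (s-1) * (n.descFactorial k * rDerangement (r - (s+1)) (n - k)) :=
              sum_triangle s n hs1 _
        _ = ∑ j ∈ Finset.Icc (s+1) n,
              (j - 1).choose (s + 1 - 1) * (n.factorial / (n - j).factorial) *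
                rDerangement (r - (s+1)) (n - j) := by
              refine Finset.sum_congr rfl fun k hk => ?_
              simp only [Finset.mem_Icc] at hk
              rw [← Finset.sum_mul, hockey s k hs1 (by omega)]
              rw [show s + 1 - 1 = s from rfl, ← Nat.descFactorial_eq_div hk.2]
              ring
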